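/- Let n be an integer with n ≥ 5, let K̄ > 0 be a real number, and let x ≥ 0. Then 2å(x) − x/n + x·å′(x) ≤ 4√n·K̄ − (n−8)x/(n(n−2)) − 6(2√n − 4)·x·K̄/(3x + 4√n·(n−2)·K̄), where a(x) = sqrt((x/(n−2) + 4K̄)² + (4n−16)K̄²), å(x) = a(x) − x/n, and å′(x) = (x/(n−2) + 4K̄)/((n−2)·a(x)) − 1/n. -/

import Mathlib

theorem key_ineq (s t K a : ℝ) (hs : 2 < s) (ht : 0 ≤ t) (hK : 0 < K)
    (ha2 : a ^ 2 = t ^ 2 + 8 * K * t + 4 * s ^ 2 * K ^ 2) (hapos : 0 < a) :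
    2 * a + t * (t + 4 * K) / a ≤
      4 * s * K + 3 * t - 6 * (2 * s - 4) * t * K / (3 * t + 4 * s * K) := by
  have hD : 0 < 3 * t + 4 * s * K := by nlinarith
  have hQ : 0 ≤ t ^ 2 * K ^ 2 * (s - 2) *
      (128 * K ^ 2 * s ^ 2 * (5 * s - 8) + 96 * t * K * (s ^ 2 + 14 * s - 24)
        + 36 * t ^ 2 * (5 * s - 6)) := by
    have h1 : (0:ℝ) < 5 * s - 8 := by linarith
    have h2 : (0:ℝ) < s ^ 2 + 14 * s - 24 := by nlinarith
    have h3 : (0:ℝ) < 5 * s - 6 := by linarith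
    have h4 : (0:ℝ) < s - 2 := by linarith
    have h5 := hK.le
    positivity
  have h1 : ((3 * t ^ 2 + 20 * K * t + 8 * s ^ 2 * K ^ 2) * (3 * t + 4 * s * K)) ^ 2 ≤ ((9 * t ^ 2 + 12 * (s + 2) * K * t + 16 * s ^ 2 * K ^ 2) * a) ^ 2 := by
    have hPa : ((9 * t ^ 2 + 12 * (s + 2) * K * t + 16 * s ^ 2 * K ^ 2) * a) ^ 2 = (9 * t ^ 2 + 12 * (s + 2) * K * t + 16 * s ^ 2 * K ^ 2) ^ 2 * (t ^ 2 + 8 * K * t + 4 * s ^ 2 * K ^ 2) := by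
      rw [mul_pow, ha2]
    rw [hPa]
    nlinarith [hQ]
  have hmain : (3 * t ^ 2 + 20 * K * t + 8 * s ^ 2 * K ^ 2) * (3 * t + 4 * s * K) ≤ (9 * t ^ 2 + 12 * (s + 2) * K * t + 16 * s ^ 2 * K ^ 2) * a :=
    le_of_pow_le_pow_left₀ two_ne_zero (by positivity) h1
  have e1 : 2 * a + t * (t + 4 * K) / a = (3 * t ^ 2 + 20 * K * t + 8 * s ^ 2 * K ^ 2) / a := by
    field_simp
    linear_combination 2 * ha2
  have e2 : 4 * s * K + 3 * t - 6 * (2 * s - 4) * t * K / (3 * t + 4 * s * K)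
      = (9 * t ^ 2 + 12 * (s + 2) * K * t + 16 * s ^ 2 * K ^ 2) / (3 * t + 4 * s * K) := by
    field_simp
    ring
  rw [e1, e2, div_le_div_iff₀ hapos hD]
  linarith [hmain]

/-- For `n ≥ 5`, `K̄ > 0` and `x ≥ 0`,
`2å − x/n + x·å′ ≤ 4√n·K̄ − (n−8)x/(n(n−2)) − 6(2√n − 4)·x·K̄/(3x + 4√n·(n−2)·K̄)`. -/
theorem stmt_7 (n : ℕ) (hn : 5 ≤ n) (K x : ℝ) (hK : 0 < K) (hx : 0 ≤ x) :
    2 * (Real.sqrt ((x / ((n : ℝ) - 2) + 4 * K) ^ 2 + (4 * (n : ℝ) - 16) * K ^ 2) - x / n)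
        - x / n
        + x *
          ((x / ((n : ℝ) - 2) + 4 * K) /
              (((n : ℝ) - 2) *
                Real.sqrt ((x / ((n : ℝ) - 2) + 4 * K) ^ 2 + (4 * (n : ℝ) - 16) * K ^ 2))
            - 1 / n)
      ≤ 4 * Real.sqrt n * K - ((n : ℝ) - 8) * x / ((n : ℝ) * ((n : ℝ) - 2))
        - 6 * (2 * Real.sqrt n - 4) * x * K /
            (3 * x + 4 * Real.sqrt n * ((n : ℝ) - 2) * K) := by
  have hn5 : (5:ℝ) ≤ (n:ℝ) := by exact_mod_cast hn
  have hm : (3:ℝ) ≤ (n:ℝ) - 2 := by linarith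
  have hm0 : ((n:ℝ) - 2) ≠ 0 := by linarith
  have hn0 : (n:ℝ) ≠ 0 := by linarith
  set s : ℝ := Real.sqrt n with hsdef
  have hs2 : s ^ 2 = (n:ℝ) := Real.sq_sqrt (by linarith)
  have hs : 2 < s := by
    nlinarith [Real.sqrt_nonneg (n:ℝ), hs2]
  set t : ℝ := x / ((n:ℝ) - 2) with htdef
  have ht : 0 ≤ t := div_nonneg hx (by linarith)
  have hxt : x = ((n:ℝ) - 2) * t := by rw [htdef]; field_simp
  set E : ℝ := (x / ((n : ℝ) - 2) + 4 * K) ^ 2 + (4 * (n : ℝ) - 16) * K ^ 2 with hEdef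
  set a : ℝ := Real.sqrt E with hadef
  have hEpos : 0 < E := by
    have h1 : (0:ℝ) < (4 * (n : ℝ) - 16) * K ^ 2 := by nlinarith
    have h2 := sq_nonneg (x / ((n : ℝ) - 2) + 4 * K)
    rw [hEdef]
    nlinarith
  have hapos : 0 < a := Real.sqrt_pos.mpr hEpos
  have ha2 : a ^ 2 = t ^ 2 + 8 * K * t + 4 * s ^ 2 * K ^ 2 := by
    rw [hadef, Real.sq_sqrt hEpos.le, hEdef, htdef, hs2]
    ring
  clear_value s t E a
  have key := key_ineq s t K a hs ht hK ha2 hapos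
  have hD : 0 < 3 * t + 4 * s * K := by nlinarith
  have hDx : 0 < 3 * x + 4 * s * ((n:ℝ) - 2) * K := by nlinarith
  have eq1 : x * ((t + 4 * K) / (((n : ℝ) - 2) * a) - 1 / n)
      = t * (t + 4 * K) / a - x / n := by
    rw [htdef]
    field_simp
  have eq2 : ((n:ℝ) - 8) * x / ((n : ℝ) * ((n : ℝ) - 2)) = 4 * x / n - 3 * t := by
    rw [htdef]
    field_simp
    ring
  have eq3 : 6 * (2 * s - 4) * x * K / (3 * x + 4 * s * ((n : ℝ) - 2) * K)
      = 6 * (2 * s - 4) * t * K / (3 * t + 4 * s * K) := by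
    rw [hxt]
    rw [show 3 * (((n:ℝ) - 2) * t) + 4 * s * ((n:ℝ) - 2) * K
        = ((n:ℝ) - 2) * (3 * t + 4 * s * K) by ring,
      show 6 * (2 * s - 4) * (((n:ℝ) - 2) * t) * K
        = ((n:ℝ) - 2) * (6 * (2 * s - 4) * t * K) by ring]
    exact mul_div_mul_left _ _ hm0
  rw [eq1, eq2, eq3]
  have expand2 : 2 * (a - x / (n:ℝ)) - x / (n:ℝ) + (t * (t + 4 * K) / a - x / (n:ℝ))
      = (2 * a + t * (t + 4 * K) / a) - 4 * (x / (n:ℝ)) := by ring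
  have expand3 : 4 * s * K - (4 * x / (n:ℝ) - 3 * t)
        - 6 * (2 * s - 4) * t * K / (3 * t + 4 * s * K)
      = (4 * s * K + 3 * t - 6 * (2 * s - 4) * t * K / (3 * t + 4 * s * K))
        - 4 * (x / (n:ℝ)) := by ring
  rw [expand2, expand3]
  exact sub_le_sub_right key _
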